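/- Pumping Lemma for ℒ-fuzzy DT tree recognizers: Let 𝐅 = (𝒜, a₀, ω) be an n-state ℒ-DT ΣX-recognizer and ℓ the cardinality of the ∧-subsemilattice D_ω generated by {ω_x(a) | x ∈ X, a ∈ A}. If t is a ΣX-tree of height ≥ (ℓ+1)n + 1, then there exist a tree s and contexts p, q with depth(q) ≥ 1 such that t = p·q·s and Φ_𝐅(p·q^k·s) = Φ_𝐅(t) for every k ≥ 0. -/

import Mathlib

/-- Trees over a ranked alphabet `σ` (with arity map `ar`) and leaf alphabet `X`. -/
inductive FTree (σ : Type) (ar : σ → ℕ) (X : Type) : Type where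
  | leaf : X → FTree σ ar X
  | node : (f : σ) → (Fin (ar f) → FTree σ ar X) → FTree σ ar X

/-- The path alphabet Γ: pairs (f, i) with i < arity of f. -/
abbrev PathSym (σ : Type) (ar : σ → ℕ) : Type := (f : σ) × Fin (ar f)

variable {σ X : Type} {ar : σ → ℕ}

/-- The set of paths of a tree: words over Γ ending in a leaf symbol. -/
def FTree.paths : FTree σ ar X → Set (List (PathSym σ ar) × X)
  | .leaf x => {([], x)}
  | .node f ts => {p | ∃ (i : Fin (ar f)) (w : List (PathSym σ ar)) (x : X),
      p = (⟨f, i⟩ :: w, x) ∧ (w, x) ∈ (ts i).paths}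

variable {A : Type}

/-- Action of a path word in a DT algebra. -/
def dtState (op : (f : σ) → A → Fin (ar f) → A) : List (PathSym σ ar) → A → A
  | [], a => a
  | ⟨f, i⟩ :: w, a => dtState op w (op f a i)

/-- The fuzzy tree language computed by an L-DT recognizer from state `a`. -/
def phi {L : Type} [SemilatticeInf L] [OrderTop L]
    (op : (f : σ) → A → Fin (ar f) → A) (ω : X → A → L) : A → FTree σ ar X → L
  | a, .leaf x => ω x a
  | a, .node f ts => Finset.univ.inf fun i => phi op ω (op f a i) (ts i)

/-- ΣX-contexts: trees with exactly one occurrence of the extra symbol ξ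
(located along the designated branch). -/
inductive Ctx (σ : Type) (ar : σ → ℕ) (X : Type) : Type where
  | hole : Ctx σ ar X
  | node : (f : σ) → (i : Fin (ar f)) → (Fin (ar f) → FTree σ ar X) →
      Ctx σ ar X → Ctx σ ar X

/-- Substituting a tree for ξ in a context. -/
def Ctx.app : Ctx σ ar X → FTree σ ar X → FTree σ ar X
  | .hole, t => t
  | .node f i ts c, t => .node f (Function.update ts i (c.app t))

/-- Composition of contexts: (p.comp q).app t = p.app (q.app t). -/
def Ctx.comp : Ctx σ ar X → Ctx σ ar X → Ctx σ ar X
  | .hole, q => q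
  | .node f i ts c, q => .node f i ts (c.comp q)

/-- The depth of a context. -/
def Ctx.depth : Ctx σ ar X → ℕ
  | .hole => 0
  | .node _ _ _ c => c.depth + 1

/-- Iterated composition q^k of a context with itself. -/
def Ctx.pow (q : Ctx σ ar X) : ℕ → Ctx σ ar X
  | 0 => .hole
  | k + 1 => q.comp (q.pow k)

/-- The height of a tree. -/
def FTree.height : FTree σ ar X → ℕ
  | .leaf _ => 0
  | .node _ ts => (Finset.univ.sup fun i => (ts i).height) + 1

/-- The state p^𝒜(a) reached at the ξ-leaf of a context. -/
def ctxState (op : (f : σ) → A → Fin (ar f) → A) : Ctx σ ar X → A → A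
  | .hole, a => a
  | .node f i _ c, a => ctxState op c (op f a i)

/-- The value Φ_{𝐅,a}(p) of a context: the meet of the leaf weights of the run
on p from a, the ξ-leaf contributing ⊤. -/
def ctxPhi {L : Type} [SemilatticeInf L] [OrderTop L]
    (op : (f : σ) → A → Fin (ar f) → A) (ω : X → A → L) : Ctx σ ar X → A → L
  | .hole, _ => ⊤
  | .node f i ts c, a =>
      ((Finset.univ.erase i).inf fun j => phi op ω (op f a j) (ts j)) ⊓
        ctxPhi op ω c (op f a i)

/-- The ∧-subsemilattice generated by a subset `R` of a lattice: all finite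
nonempty meets of elements of `R`. -/
inductive MeetGen {L : Type} [SemilatticeInf L] (R : Set L) : L → Prop
  | base {a : L} : a ∈ R → MeetGen R a
  | inf {a b : L} : MeetGen R a → MeetGen R b → MeetGen R (a ⊓ b)


section Aux

open Classical

variable {L : Type} [Lattice L] [BoundedOrder L]
variable (op : (f : σ) → A → Fin (ar f) → A) (ω : X → A → L)

/-- take/drop on contexts -/
def ctake : ℕ → Ctx σ ar X → Ctx σ ar X
  | 0, _ => .hole
  | _ + 1, .hole => .hole
  | m + 1, .node f i ts c => .node f i ts (ctake m c)

def cdrop : ℕ → Ctx σ ar X → Ctx σ ar X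
  | 0, c => c
  | _ + 1, .hole => .hole
  | m + 1, .node _ _ _ c => cdrop m c

lemma ctake_hole (m : ℕ) : ctake m (.hole : Ctx σ ar X) = .hole := by
  cases m <;> rfl

lemma comp_ctake_cdrop (m : ℕ) (c : Ctx σ ar X) :
    (ctake m c).comp (cdrop m c) = c := by
  induction m generalizing c with
  | zero => rfl
  | succ m ih => cases c with
    | hole => rfl
    | node f i ts c => simp only [ctake, cdrop, Ctx.comp, ih]

lemma depth_ctake (m : ℕ) (c : Ctx σ ar X) :
    (ctake m c).depth = min m c.depth := by
  induction m generalizing c with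
  | zero => simp [ctake, Ctx.depth]
  | succ m ih => cases c with
    | hole => simp [ctake, Ctx.depth]
    | node f i ts c =>
      simp only [ctake, Ctx.depth, ih]
      omega

lemma depth_cdrop (m : ℕ) (c : Ctx σ ar X) :
    (cdrop m c).depth = c.depth - m := by
  induction m generalizing c with
  | zero => simp [cdrop]
  | succ m ih => cases c with
    | hole => simp [cdrop, Ctx.depth]
    | node f i ts c =>
      simp only [cdrop, Ctx.depth, ih]
      omega

lemma ctake_add (i m : ℕ) (c : Ctx σ ar X) :
    ctake (i + m) c = (ctake i c).comp (ctake m (cdrop i c)) := by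
  induction i generalizing c with
  | zero => simp [ctake, cdrop, Ctx.comp]
  | succ i ih => cases c with
    | hole => simp [ctake_hole, cdrop, Ctx.comp]
    | node f i' ts c =>
      have h1 : i + 1 + m = (i + m) + 1 := by omega
      rw [h1]
      simp only [ctake, cdrop, Ctx.comp, ih]

lemma app_comp (p q : Ctx σ ar X) (t : FTree σ ar X) :
    (p.comp q).app t = p.app (q.app t) := by
  induction p with
  | hole => rfl
  | node f i ts c ih => simp only [Ctx.comp, Ctx.app, ih]

lemma ctxState_comp (p q : Ctx σ ar X) (a : A) :
    ctxState op (p.comp q) a = ctxState op q (ctxState op p a) := by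
  induction p generalizing a with
  | hole => rfl
  | node f i ts c ih => simp only [Ctx.comp, ctxState, ih]

lemma ctxPhi_comp (p q : Ctx σ ar X) (a : A) :
    ctxPhi op ω (p.comp q) a
      = ctxPhi op ω p a ⊓ ctxPhi op ω q (ctxState op p a) := by
  induction p generalizing a with
  | hole => simp [Ctx.comp, ctxPhi, ctxState]
  | node f i ts c ih =>
    simp only [Ctx.comp, ctxPhi, ctxState, ih, inf_assoc]

lemma phi_app (c : Ctx σ ar X) (t : FTree σ ar X) (a : A) :
    phi op ω a (c.app t)
      = ctxPhi op ω c a ⊓ phi op ω (ctxState op c a) t := by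
  induction c generalizing a with
  | hole => simp [Ctx.app, ctxPhi, ctxState]
  | node f i ts c ih =>
    show (Finset.univ.inf fun j =>
        phi op ω (op f a j) (Function.update ts i (c.app t) j))
      = _
    have hu : (Finset.univ : Finset (Fin (ar f)))
        = insert i (Finset.univ.erase i) :=
      (Finset.insert_erase (Finset.mem_univ i)).symm
    rw [hu, Finset.inf_insert]
    have he : ((Finset.univ.erase i).inf fun j =>
        phi op ω (op f a j) (Function.update ts i (c.app t) j))
        = (Finset.univ.erase i).inf fun j => phi op ω (op f a j) (ts j) := by
      refine Finset.inf_congr rfl fun j hj => ?_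
      rw [Function.update_of_ne (Finset.ne_of_mem_erase hj)]
    rw [he, Function.update_self, ih]
    show _ = ((Finset.univ.erase i).inf fun j => phi op ω (op f a j) (ts j)) ⊓
        ctxPhi op ω c (op f a i) ⊓ phi op ω (ctxState op c (op f a i)) t
    ac_rfl

lemma ctxState_pow (q : Ctx σ ar X) (a : A) (h : ctxState op q a = a) :
    ∀ k, ctxState op (q.pow k) a = a := by
  intro k
  induction k with
  | zero => rfl
  | succ k ih => rw [Ctx.pow, ctxState_comp, h, ih]

lemma ctxPhi_pow_absorb (q : Ctx σ ar X) (a : A) (v : L)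
    (hs : ctxState op q a = a) (h : v ⊓ ctxPhi op ω q a = v) :
    ∀ k, v ⊓ ctxPhi op ω (q.pow k) a = v := by
  intro k
  induction k with
  | zero => simp [Ctx.pow, ctxPhi]
  | succ k ih =>
    rw [Ctx.pow, ctxPhi_comp, hs, ← inf_assoc, h, ih]

lemma meetGen_finset_inf {R : Set L} {ι : Type} {s : Finset ι}
    (hs : s.Nonempty) {f : ι → L} (h : ∀ i ∈ s, MeetGen R (f i)) :
    MeetGen R (s.inf f) := by
  classical
  induction s using Finset.cons_induction with
  | empty => exact absurd hs (by simp)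
  | cons a s ha ih =>
    rw [Finset.inf_cons]
    rcases s.eq_empty_or_nonempty with rfl | hs'
    · simpa using h a (by simp)
    · exact (h a (by simp)).inf (ih hs' (fun i hi => h i (by simp [hi])))

lemma phi_memGen (har : ∀ f : σ, 1 ≤ ar f) (t : FTree σ ar X) (a : A) :
    MeetGen {c | ∃ x a, ω x a = c} (phi op ω a t) := by
  induction t generalizing a with
  | leaf x => exact .base ⟨x, a, rfl⟩
  | node f ts ih =>
    show MeetGen _ (Finset.univ.inf fun i => phi op ω (op f a i) (ts i))
    have : Nonempty (Fin (ar f)) := ⟨⟨0, har f⟩⟩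
    exact meetGen_finset_inf Finset.univ_nonempty fun i _ => ih i _

lemma ctxPhi_memGen (har : ∀ f : σ, 1 ≤ ar f) (c : Ctx σ ar X) (a : A) :
    ctxPhi op ω c a = ⊤ ∨ MeetGen {c | ∃ x a, ω x a = c} (ctxPhi op ω c a) := by
  induction c generalizing a with
  | hole => exact Or.inl rfl
  | node f i ts c ih =>
    have hnode : ctxPhi op ω (Ctx.node f i ts c) a
        = ((Finset.univ.erase i).inf fun j => phi op ω (op f a j) (ts j)) ⊓
          ctxPhi op ω c (op f a i) := rfl
    rw [hnode]
    rcases (Finset.univ.erase i).eq_empty_or_nonempty with he | he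
    · rw [he, Finset.inf_empty, top_inf_eq]
      exact ih _
    · have hE : MeetGen {c | ∃ x a, ω x a = c}
          ((Finset.univ.erase i).inf fun j => phi op ω (op f a j) (ts j)) :=
        meetGen_finset_inf he fun j _ => phi_memGen op ω har (ts j) _
      rcases ih (op f a i) with h | h
      · rw [h, inf_top_eq]; exact Or.inr hE
      · exact Or.inr (hE.inf h)

lemma meetGen_finite {R : Set L} (hR : R.Finite) :
    {c | MeetGen R c}.Finite := by
  classical
  have key : ∀ c, MeetGen R c → ∃ s : Finset L, ↑s ⊆ R ∧ s.inf id = c := by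
    intro c hc
    induction hc with
    | base h => exact ⟨{_}, by simpa using h, by simp⟩
    | inf _ _ ih1 ih2 =>
      obtain ⟨s1, hs1, h1⟩ := ih1
      obtain ⟨s2, hs2, h2⟩ := ih2
      exact ⟨s1 ∪ s2, by simp [Finset.coe_union, Set.union_subset_iff, hs1, hs2],
        by rw [Finset.inf_union, h1, h2]⟩
  apply Set.Finite.subset
    (Finset.finite_toSet ((hR.toFinset.powerset).image fun s => s.inf id))
  intro c hc
  obtain ⟨s, hs, hinf⟩ := key c hc
  simp only [Finset.coe_image, Set.mem_image, Finset.mem_coe, Finset.mem_powerset]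
  exact ⟨s, by intro x hx; exact hR.mem_toFinset.2 (hs hx), hinf⟩

lemma exists_branch (har : ∀ f : σ, 1 ≤ ar f) (t : FTree σ ar X) (m : ℕ)
    (hm : m ≤ t.height) :
    ∃ (c : Ctx σ ar X) (s : FTree σ ar X), c.depth = m ∧ t = c.app s := by
  induction t generalizing m with
  | leaf x =>
    have : m = 0 := by simpa [FTree.height] using hm
    subst this
    exact ⟨.hole, .leaf x, rfl, rfl⟩
  | node f ts ih =>
    match m with
    | 0 => exact ⟨.hole, .node f ts, rfl, rfl⟩
    | m + 1 =>
      have : Nonempty (Fin (ar f)) := ⟨⟨0, har f⟩⟩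
      obtain ⟨i, _, hi⟩ := Finset.exists_mem_eq_sup Finset.univ
        Finset.univ_nonempty (fun i => (ts i).height)
      have hm' : m ≤ (ts i).height := by
        have : m + 1 ≤ (Finset.univ.sup fun i => (ts i).height) + 1 := hm
        omega
      obtain ⟨c, s, hd, hs⟩ := ih i m hm'
      refine ⟨.node f i ts c, s, by simp [Ctx.depth, hd], ?_⟩
      show FTree.node f ts = FTree.node f (Function.update ts i (c.app s))
      rw [← hs, Function.update_eq_self]

end Aux

/-- Pumping Lemma for ℒ-fuzzy DT tree recognizers: if 𝐅 is an
n-state ℒ-DT ΣX-recognizer and ℓ = |D_ω| where D_ω is the ∧-subsemilattice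
generated by {ω_x(a) | x ∈ X, a ∈ A}, then any tree t of height ≥ (ℓ+1)n + 1
decomposes as t = p·q·s with depth(q) ≥ 1 and Φ_𝐅(p·qᵏ·s) = Φ_𝐅(t) for
all k ≥ 0. -/
theorem fuzzy_dt_pumping {L : Type} [Lattice L] [BoundedOrder L]
    [Fintype A] [Fintype X] (har : ∀ f : σ, 1 ≤ ar f)
    (op : (f : σ) → A → Fin (ar f) → A) (a₀ : A) (ω : X → A → L)
    (n ℓ : ℕ) (hn : n = Fintype.card A)
    (hℓ : ℓ = {c | MeetGen {c | ∃ x a, ω x a = c} c}.ncard)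
    (t : FTree σ ar X) (ht : (ℓ + 1) * n + 1 ≤ t.height) :
    ∃ (p q : Ctx σ ar X) (s : FTree σ ar X), 1 ≤ q.depth ∧
      t = p.app (q.app s) ∧
      ∀ k : ℕ, phi op ω a₀ (p.app ((q.pow k).app s)) = phi op ω a₀ t := by
  classical
  set R : Set L := {c | ∃ x a, ω x a = c} with hR
  have hRfin : R.Finite := by
    have hre : R = Set.range (fun p : X × A => ω p.1 p.2) := by
      ext c
      constructor
      · rintro ⟨x, a, rfl⟩; exact ⟨(x, a), rfl⟩
      · rintro ⟨⟨x, a⟩, rfl⟩; exact ⟨x, a, rfl⟩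
    rw [hre]; exact Set.finite_range _
  have hSfin : {c | MeetGen R c}.Finite := meetGen_finite hRfin
  set N : ℕ := (ℓ + 1) * n + 1 with hN
  obtain ⟨c, s₀, hdc, hts⟩ := exists_branch har t N ht
  -- the key combinatorial/algebraic step, given two repeating positions
  have key : ∀ i j : ℕ, i < j → j ≤ N →
      ctxState op (ctake i c) a₀ = ctxState op (ctake j c) a₀ →
      ctxPhi op ω (ctake i c) a₀ = ctxPhi op ω (ctake j c) a₀ →
      ∃ (p q : Ctx σ ar X) (s : FTree σ ar X), 1 ≤ q.depth ∧
        t = p.app (q.app s) ∧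
        ∀ k : ℕ, phi op ω a₀ (p.app ((q.pow k).app s)) = phi op ω a₀ t := by
    intro i j hij hjN hst hph
    set p : Ctx σ ar X := ctake i c with hp
    set q : Ctx σ ar X := ctake (j - i) (cdrop i c) with hq
    set s : FTree σ ar X := (cdrop (j - i) (cdrop i c)).app s₀ with hs
    have hjdec : ctake j c = p.comp q := by
      have hji : i + (j - i) = j := by omega
      rw [← hji, ctake_add]
    have hqd : 1 ≤ q.depth := by
      rw [hq, depth_ctake, depth_cdrop, hdc]
      omega
    have htdec : t = p.app (q.app s) := by
      rw [hts, ← comp_ctake_cdrop i c, app_comp, ← comp_ctake_cdrop (j - i) (cdrop i c),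
        app_comp]
    set a₁ : A := ctxState op p a₀ with ha₁
    have hloop : ctxState op q a₁ = a₁ := by
      rw [ha₁, ← ctxState_comp, ← hjdec, ← hst]
    set v : L := ctxPhi op ω p a₀ with hv
    have habs : v ⊓ ctxPhi op ω q a₁ = v := by
      rw [hv, ha₁, ← ctxPhi_comp, ← hjdec, ← hph]
    have hval : ∀ k : ℕ, phi op ω a₀ (p.app ((q.pow k).app s)) = v ⊓ phi op ω a₁ s := by
      intro k
      rw [phi_app, ← hv, ← ha₁, phi_app, ctxState_pow op q a₁ hloop k, ← inf_assoc,
        ctxPhi_pow_absorb op ω q a₁ v hloop habs k]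
    refine ⟨p, q, s, hqd, htdec, fun k => ?_⟩
    rw [hval k, htdec]
    have h1 : phi op ω a₀ (p.app (q.app s)) = v ⊓ phi op ω a₁ s := by
      have := hval 1
      simpa [Ctx.pow, Ctx.comp, app_comp, Ctx.app] using this
    rw [h1]
  -- pigeonhole
  set T2 : Finset L := insert ⊤ hSfin.toFinset with hT2
  have hT2card : T2.card ≤ ℓ + 1 := by
    have h2 : hSfin.toFinset.card = ℓ := by
      rw [hℓ, Set.ncard_eq_toFinset_card _ hSfin]
    calc T2.card ≤ hSfin.toFinset.card + 1 := Finset.card_insert_le _ _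
      _ = ℓ + 1 := by rw [h2]
  set T : Finset (A × L) := Finset.univ ×ˢ T2 with hT
  have hTcard : T.card < N + 1 := by
    have h1 : T.card = n * T2.card := by
      rw [hT, Finset.card_product, Finset.card_univ, hn]
    have h2 : T.card ≤ n * (ℓ + 1) := by
      rw [h1]; exact Nat.mul_le_mul_left n hT2card
    have h3 : n * (ℓ + 1) = (ℓ + 1) * n := Nat.mul_comm _ _
    omega
  set g : Fin (N + 1) → A × L := fun k =>
    (ctxState op (ctake k.val c) a₀, ctxPhi op ω (ctake k.val c) a₀) with hg
  have hmaps : ∀ k ∈ (Finset.univ : Finset (Fin (N + 1))), g k ∈ T := by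
    intro k _
    refine Finset.mem_product.2 ⟨Finset.mem_univ _, ?_⟩
    rcases ctxPhi_memGen op ω har (ctake k.val c) a₀ with h | h
    · rw [hg]; simp only [h]; exact Finset.mem_insert_self _ _
    · exact Finset.mem_insert_of_mem (hSfin.mem_toFinset.2 h)
  have hcard : T.card < (Finset.univ : Finset (Fin (N + 1))).card := by
    simpa using hTcard
  obtain ⟨x, -, y, -, hxy, hgxy⟩ :=
    Finset.exists_ne_map_eq_of_card_lt_of_maps_to hcard hmaps
  have h1 := congrArg Prod.fst hgxy
  have h2 := congrArg Prod.snd hgxy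
  simp only [hg] at h1 h2
  rcases lt_or_gt_of_ne hxy with hlt | hlt
  · exact key x.val y.val hlt (by omega) h1 h2
  · exact key y.val x.val hlt (by omega) h1.symm h2.symm
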